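/- For every α ∈ (1,∞) and every η ∈ (0,1), the minimum over f ∈ ℝ of the conditional risk η·l̃^α(f) + (1-η)·l̃^α(-f) equals (α/(α-1))·(1 - (η^α + (1-η)^α)^{1/α}), attained at f = α·log(η/(1-η)). -/

import Mathlib

/-- The sigmoid function `σ(z) = 1/(1+e^{-z})`. -/
noncomputable def sigmoid (z : ℝ) : ℝ := 1 / (1 + Real.exp (-z))

/-- The margin `α`-loss for `α ∈ (1,∞)`: `l̃^α(z) = (α/(α-1))·(1 - σ(z)^{1-1/α})`. -/
noncomputable def margAlphaLoss (α : ℝ) (z : ℝ) : ℝ :=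
  (α / (α - 1)) * (1 - sigmoid z ^ (1 - 1/α))

lemma sigmoid_pos (z : ℝ) : 0 < sigmoid z := by
  unfold sigmoid; positivity

lemma sigmoid_lt_one (z : ℝ) : sigmoid z < 1 := by
  unfold sigmoid
  rw [div_lt_one (by positivity)]
  linarith [Real.exp_pos (-z)]

lemma sigmoid_neg (z : ℝ) : sigmoid (-z) = 1 - sigmoid z := by
  unfold sigmoid
  have h1 : (0:ℝ) < 1 + Real.exp (-z) := by positivity
  have h2 : (0:ℝ) < 1 + Real.exp z := by positivity
  rw [neg_neg]
  field_simp
  have h3 : Real.exp (-z) * Real.exp z = 1 := by rw [← Real.exp_add]; simp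
  linear_combination -h3

/-- Key Hölder-type inequality. -/
lemma G_le (α : ℝ) (hα : 1 < α) (η : ℝ) (hη : η ∈ Set.Ioo (0:ℝ) 1)
    (p : ℝ) (hp0 : 0 ≤ p) (hp1 : p ≤ 1) :
    η * p ^ (1 - 1/α) + (1 - η) * (1 - p) ^ (1 - 1/α)
      ≤ (η ^ α + (1 - η) ^ α) ^ (1/α) := by
  obtain ⟨hη0, hη1⟩ := hη
  have hη1' : (0:ℝ) < 1 - η := by linarith
  have hα0 : (0:ℝ) < α := by linarith
  set q : ℝ := α / (α - 1) with hq
  have hc : α.HolderConjugate q := Real.HolderConjugate.conjExponent hα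
  have hq0 : (0:ℝ) < q := hc.symm.pos
  have hA : (0:ℝ) < η ^ α + (1 - η) ^ α := by positivity
  set K : ℝ := (η ^ α + (1 - η) ^ α) ^ (1/α) with hK
  have hKpos : 0 < K := Real.rpow_pos_of_pos hA _
  have hKα : K ^ α = η ^ α + (1 - η) ^ α := by
    rw [hK, ← Real.rpow_mul hA.le, one_div, inv_mul_cancel₀ (by linarith), Real.rpow_one]
  have hα1 : α - 1 ≠ 0 := by linarith
  have hs : (1 - 1/α) * q = 1 := by
    rw [hq]; field_simp
  have y1 : (η/K) * p ^ (1 - 1/α) ≤ (η/K) ^ α / α + p / q := by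
    have h := Real.young_inequality_of_nonneg (div_nonneg hη0.le hKpos.le)
      (Real.rpow_nonneg hp0 (1 - 1/α)) hc
    rwa [← Real.rpow_mul hp0, hs, Real.rpow_one] at h
  have y2 : ((1-η)/K) * (1 - p) ^ (1 - 1/α) ≤ ((1-η)/K) ^ α / α + (1 - p) / q := by
    have h := Real.young_inequality_of_nonneg (div_nonneg hη1'.le hKpos.le)
      (Real.rpow_nonneg (by linarith : (0:ℝ) ≤ 1 - p) (1 - 1/α)) hc
    rwa [← Real.rpow_mul (by linarith), hs, Real.rpow_one] at h
  have hdiv1 : (η/K) ^ α = η ^ α / K ^ α := Real.div_rpow hη0.le hKpos.le α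
  have hdiv2 : ((1-η)/K) ^ α = (1-η) ^ α / K ^ α := Real.div_rpow hη1'.le hKpos.le α
  have e1 : (η/K) ^ α / α + ((1-η)/K) ^ α / α = 1/α := by
    rw [hdiv1, hdiv2, hKα]
    field_simp
  have e2 : p / q + (1 - p) / q = 1/q := by
    field_simp
    ring
  have e3 : 1/α + 1/q = 1 := by
    have := hc.inv_add_inv_eq_one
    simpa [one_div] using this
  have sum1 : (η/K) * p ^ (1 - 1/α) + ((1-η)/K) * (1 - p) ^ (1 - 1/α) ≤ 1 := by
    calc (η/K) * p ^ (1 - 1/α) + ((1-η)/K) * (1 - p) ^ (1 - 1/α)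
        ≤ ((η/K) ^ α / α + p / q) + (((1-η)/K) ^ α / α + (1 - p) / q) := by linarith
      _ = ((η/K) ^ α / α + ((1-η)/K) ^ α / α) + (p / q + (1 - p) / q) := by ring
      _ = 1/α + 1/q := by rw [e1, e2]
      _ = 1 := e3
  have hrw : η * p ^ (1 - 1/α) + (1 - η) * (1 - p) ^ (1 - 1/α)
      = K * ((η/K) * p ^ (1 - 1/α) + ((1-η)/K) * (1 - p) ^ (1 - 1/α)) := by
    field_simp
  rw [hrw]
  nlinarith [sum1, hKpos]

lemma sigmoid_star (α : ℝ) (_hα : 1 < α) (η : ℝ) (hη : η ∈ Set.Ioo (0:ℝ) 1) :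
    sigmoid (α * Real.log (η / (1 - η))) = η ^ α / (η ^ α + (1 - η) ^ α) := by
  obtain ⟨hη0, hη1⟩ := hη
  have hη1' : (0:ℝ) < 1 - η := by linarith
  have hr : (0:ℝ) < η / (1 - η) := by positivity
  have hexp : Real.exp (-(α * Real.log (η / (1 - η)))) = (1 - η) ^ α / η ^ α := by
    rw [show -(α * Real.log (η / (1 - η))) = Real.log (η / (1 - η)) * (-α) by ring,
      ← Real.rpow_def_of_pos hr, Real.rpow_neg hr.le, ← Real.inv_rpow hr.le,
      inv_div, Real.div_rpow hη1'.le hη0.le]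
  unfold sigmoid
  rw [hexp]
  have hηα : (0:ℝ) < η ^ α := Real.rpow_pos_of_pos hη0 α
  have hη'α : (0:ℝ) < (1 - η) ^ α := Real.rpow_pos_of_pos hη1' α
  field_simp

lemma G_star (α : ℝ) (hα : 1 < α) (η : ℝ) (hη : η ∈ Set.Ioo (0:ℝ) 1) :
    η * (η ^ α / (η ^ α + (1 - η) ^ α)) ^ (1 - 1/α)
      + (1 - η) * (1 - η ^ α / (η ^ α + (1 - η) ^ α)) ^ (1 - 1/α)
      = (η ^ α + (1 - η) ^ α) ^ (1/α) := by
  obtain ⟨hη0, hη1⟩ := hη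
  have hη1' : (0:ℝ) < 1 - η := by linarith
  have hα0 : (0:ℝ) < α := by linarith
  have hηα : (0:ℝ) < η ^ α := Real.rpow_pos_of_pos hη0 α
  have hη'α : (0:ℝ) < (1 - η) ^ α := Real.rpow_pos_of_pos hη1' α
  have hA : (0:ℝ) < η ^ α + (1 - η) ^ α := by positivity
  set s : ℝ := 1 - 1/α with hsdef
  have hone : 1 - η ^ α / (η ^ α + (1 - η) ^ α) = (1 - η) ^ α / (η ^ α + (1 - η) ^ α) := by
    field_simp
    ring
  have hαs : α * s = α - 1 := by rw [hsdef]; field_simp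
  have key : ∀ x : ℝ, 0 < x → x * (x ^ α / (η ^ α + (1 - η) ^ α)) ^ s
      = x ^ α / (η ^ α + (1 - η) ^ α) ^ s := by
    intro x hx
    have hxα : (0:ℝ) < x ^ α := Real.rpow_pos_of_pos hx α
    rw [Real.div_rpow hxα.le hA.le, ← Real.rpow_mul hx.le, hαs]
    rw [show x * (x ^ (α - 1) / (η ^ α + (1 - η) ^ α) ^ s)
        = (x ^ (1:ℝ) * x ^ (α - 1)) / (η ^ α + (1 - η) ^ α) ^ s by rw [Real.rpow_one]; ring,
      ← Real.rpow_add hx]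
    norm_num
  rw [hone, key η hη0, key (1 - η) hη1', ← add_div]
  have hfin : (η ^ α + (1 - η) ^ α) ^ (1/α)
      = (η ^ α + (1 - η) ^ α) / (η ^ α + (1 - η) ^ α) ^ s := by
    rw [show (1/α : ℝ) = 1 - s by rw [hsdef]; ring, Real.rpow_sub hA, Real.rpow_one]
  rw [hfin]

lemma risk_eq (α : ℝ) (η : ℝ) (f : ℝ) :
    η * margAlphaLoss α f + (1 - η) * margAlphaLoss α (-f)
      = (α / (α - 1)) * (1 - (η * sigmoid f ^ (1 - 1/α)
          + (1 - η) * (1 - sigmoid f) ^ (1 - 1/α))) := by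
  unfold margAlphaLoss
  rw [sigmoid_neg]
  ring

/-- For every `α ∈ (1,∞)` and every `η ∈ (0,1)`, the minimum over `f ∈ ℝ` of the
conditional risk `η·l̃^α(f) + (1-η)·l̃^α(-f)` equals
`(α/(α-1))·(1 - (η^α + (1-η)^α)^{1/α})`, attained at `f = α·log(η/(1-η))`. -/
theorem margAlphaLoss_min_conditional_risk
    (α : ℝ) (hα : 1 < α) (η : ℝ) (hη : η ∈ Set.Ioo (0:ℝ) 1) :
    η * margAlphaLoss α (α * Real.log (η / (1 - η)))
        + (1 - η) * margAlphaLoss α (-(α * Real.log (η / (1 - η))))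
      = (α / (α - 1)) * (1 - (η ^ α + (1 - η) ^ α) ^ (1/α)) ∧
    ∀ f : ℝ,
      η * margAlphaLoss α (α * Real.log (η / (1 - η)))
          + (1 - η) * margAlphaLoss α (-(α * Real.log (η / (1 - η))))
        ≤ η * margAlphaLoss α f + (1 - η) * margAlphaLoss α (-f) := by
  have hmin : η * margAlphaLoss α (α * Real.log (η / (1 - η)))
        + (1 - η) * margAlphaLoss α (-(α * Real.log (η / (1 - η))))
      = (α / (α - 1)) * (1 - (η ^ α + (1 - η) ^ α) ^ (1/α)) := by
    rw [risk_eq, sigmoid_star α hα η hη, G_star α hα η hη]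
  refine ⟨hmin, fun f => ?_⟩
  rw [hmin, risk_eq]
  have hG := G_le α hα η hη (sigmoid f) (sigmoid_pos f).le (sigmoid_lt_one f).le
  have hc0 : (0:ℝ) < α / (α - 1) := by
    apply div_pos <;> linarith
  nlinarith
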